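/- Let q ≥ 2 be an integer, X a random variable with values in [0,1), and F its cumulative distribution function. Suppose F has no jump at any base-q fraction, i.e. at any point of the form Σ_{k=1}^n j_k q^{−k} with j_k ∈ {0,1,…,q−1} and n ∈ ℕ. Then for every n ≥ 1 and every x ∈ [0,1], the cumulative distribution function F_n of T^n(X) satisfies F_n(x) = Σ_{j=0}^{q^n−1} [F(q^{−n}(j+x)) − F(q^{−n} j)]. -/

import Mathlib

open MeasureTheory Set

/-- The base-`q` map `T(x) = q·x − ⌊q·x⌋`. -/
noncomputable def T (q : ℕ) : ℝ → ℝ := fun x => Int.fract ((q : ℝ) * x)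

lemma T_fract (q : ℕ) (y : ℝ) : T q (Int.fract y) = Int.fract ((q : ℝ) * y) := by
  unfold T
  have h : (q:ℝ) * Int.fract y = (q:ℝ) * y - (((q : ℤ) * ⌊y⌋ : ℤ) : ℝ) := by
    rw [Int.fract]; push_cast; ring
  rw [h, Int.fract_sub_intCast]

lemma T_iterate (q : ℕ) (n : ℕ) (y : ℝ) :
    (T q)^[n] (Int.fract y) = Int.fract ((q : ℝ) ^ n * y) := by
  induction n generalizing y with
  | zero => simp
  | succ n ih =>
    rw [Function.iterate_succ_apply, T_fract, ih]
    ring_nf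

theorem stmt0
    {Ω : Type*} [MeasurableSpace Ω] (ℙ : Measure Ω) [IsProbabilityMeasure ℙ]
    (q : ℕ) (hq : 2 ≤ q)
    (X : Ω → ℝ) (hX : Measurable X) (hXrange : ∀ ω, X ω ∈ Set.Ico (0:ℝ) 1)
    -- `F` has no jump at any base-`q` fraction `m/q^n` in `[0,1)`
    (hnojump : ∀ n m : ℕ, m < q ^ n → ℙ {ω | X ω = (m : ℝ) / (q : ℝ) ^ n} = 0)
    (n : ℕ) (hn : 1 ≤ n) (x : ℝ) (hx : x ∈ Set.Icc (0:ℝ) 1) :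
    (ℙ {ω | (T q)^[n] (X ω) ≤ x}).toReal
      = ∑ j ∈ Finset.range (q ^ n),
          ((ℙ {ω | X ω ≤ ((j : ℝ) + x) / (q : ℝ) ^ n}).toReal
            - (ℙ {ω | X ω ≤ (j : ℝ) / (q : ℝ) ^ n}).toReal) := by
  obtain ⟨hx0, hx1⟩ := hx
  have hq0 : (0:ℝ) < (q:ℝ) := by positivity
  have hqn : (0:ℝ) < (q:ℝ)^n := by positivity
  set N := q ^ n with hN
  set a : ℕ → ℝ := fun j => (j:ℝ) / (q:ℝ)^n with ha
  set b : ℕ → ℝ := fun j => ((j:ℝ) + x) / (q:ℝ)^n with hb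
  have hab : ∀ j, a j ≤ b j := fun j =>
    div_le_div_of_nonneg_right (by linarith) hqn.le
  -- step 1 : set identity
  have hset : {ω | (T q)^[n] (X ω) ≤ x}
      = ⋃ j ∈ Finset.range N, X ⁻¹' Icc (a j) (b j) := by
    ext ω
    obtain ⟨hy0, hy1⟩ := hXrange ω
    simp only [mem_setOf_eq, Set.mem_iUnion, Finset.mem_range, mem_preimage, mem_Icc,
      ha, hb]
    set y := X ω with hy
    have hTy : (T q)^[n] y = Int.fract ((q:ℝ)^n * y) := by
      conv_lhs => rw [← Int.fract_eq_self.2 ⟨hy0, hy1⟩]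
      rw [T_iterate]
    rw [hTy]
    constructor
    · intro h
      set t := (q:ℝ)^n * y with ht
      have ht0 : 0 ≤ t := by positivity
      have htlt : t < (q:ℝ)^n := by
        rw [ht]
        calc (q:ℝ)^n * y < (q:ℝ)^n * 1 := by
              exact mul_lt_mul_of_pos_left hy1 hqn
          _ = (q:ℝ)^n := mul_one _
      have hfl0 : 0 ≤ ⌊t⌋ := Int.floor_nonneg.2 ht0
      refine ⟨⌊t⌋.toNat, ?_, ?_, ?_⟩
      · have : ⌊t⌋ < (N : ℤ) := by
          apply Int.floor_lt.2
          push_cast [hN]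
          exact htlt
        omega
      · rw [div_le_iff₀ hqn]
        have hle : (⌊t⌋ : ℝ) ≤ t := Int.floor_le t
        have hc : ((⌊t⌋.toNat : ℕ) : ℝ) = (⌊t⌋ : ℝ) := by
          exact_mod_cast congrArg (Int.cast : ℤ → ℝ) (Int.toNat_of_nonneg hfl0)
        rw [hc, mul_comm y]
        linarith
      · rw [le_div_iff₀ hqn]
        have hfr : Int.fract t = t - (⌊t⌋ : ℝ) := rfl
        have hc : ((⌊t⌋.toNat : ℕ) : ℝ) = (⌊t⌋ : ℝ) := by
          exact_mod_cast congrArg (Int.cast : ℤ → ℝ) (Int.toNat_of_nonneg hfl0)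
        rw [hc, mul_comm y]
        rw [hfr] at h
        linarith
    · rintro ⟨j, hjN, h1, h2⟩
      rw [div_le_iff₀ hqn, mul_comm y] at h1
      rw [le_div_iff₀ hqn, mul_comm y] at h2
      set t := (q:ℝ)^n * y with ht
      have h1' : (j:ℝ) ≤ t := h1
      have h2' : t ≤ (j:ℝ) + x := h2
      by_cases hcase : t < (j:ℝ) + 1
      · have hfl : ⌊t⌋ = (j:ℤ) := by
          apply Int.floor_eq_iff.2
          constructor
          · exact_mod_cast h1'
          · push_cast; exact hcase
        have : Int.fract t = t - (j:ℝ) := by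
          rw [Int.fract, hfl]; push_cast; ring
        rw [this]; linarith
      · push_neg at hcase
        have hteq : t = ((j+1 : ℕ) : ℝ) := by push_cast; linarith
        rw [hteq, Int.fract_natCast]
        exact hx0
  -- step 2: measures
  have hIocm : ∀ j, MeasurableSet (X ⁻¹' Ioc (a j) (b j)) :=
    fun j => hX measurableSet_Ioc
  have hdisj : (↑(Finset.range N) : Set ℕ).Pairwise
      (Function.onFun Disjoint fun j => X ⁻¹' Ioc (a j) (b j)) := by
    intro i _ j _ hij
    apply Set.disjoint_left.2
    intro ω hi hj
    simp only [mem_preimage, mem_Ioc, ha, hb] at hi hj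
    rcases lt_or_gt_of_ne hij with h | h
    · have hij' : (i:ℝ) + 1 ≤ (j:ℝ) := by exact_mod_cast h
      have hle : ((i:ℝ) + x) / (q:ℝ)^n ≤ (j:ℝ) / (q:ℝ)^n :=
        div_le_div_of_nonneg_right (by linarith) hqn.le
      exact absurd (hj.1.trans_le (hi.2.trans hle)) (lt_irrefl _)
    · have hij' : (j:ℝ) + 1 ≤ (i:ℝ) := by exact_mod_cast h
      have hle : ((j:ℝ) + x) / (q:ℝ)^n ≤ (i:ℝ) / (q:ℝ)^n :=
        div_le_div_of_nonneg_right (by linarith) hqn.le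
      exact absurd (hi.1.trans_le (hj.2.trans hle)) (lt_irrefl _)
  have hnull : ℙ (⋃ j ∈ Finset.range N, X ⁻¹' {a j}) = 0 := by
    refine (measure_biUnion_null_iff (Finset.range N).countable_toSet).2 ?_
    intro j hj
    have hjN : j < N := Finset.mem_range.1 hj
    have := hnojump n j (hN ▸ hjN)
    convert this using 2
    rfl
  have hsub : {ω | (T q)^[n] (X ω) ≤ x}
      ⊆ (⋃ j ∈ Finset.range N, X ⁻¹' Ioc (a j) (b j)) ∪
        (⋃ j ∈ Finset.range N, X ⁻¹' {a j}) := by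
    rw [hset]
    intro ω hω
    simp only [Set.mem_iUnion, mem_preimage, mem_Icc, Set.mem_union,
      mem_Ioc, mem_singleton_iff] at hω ⊢
    obtain ⟨j, hj, h1, h2⟩ := hω
    rcases eq_or_lt_of_le h1 with heq | hlt
    · exact Or.inr ⟨j, hj, heq.symm⟩
    · exact Or.inl ⟨j, hj, hlt, h2⟩
  have hsup : (⋃ j ∈ Finset.range N, X ⁻¹' Ioc (a j) (b j))
      ⊆ {ω | (T q)^[n] (X ω) ≤ x} := by
    rw [hset]
    apply Set.iUnion₂_mono
    intro j hj
    exact Set.preimage_mono Set.Ioc_subset_Icc_self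
  have hkey : ℙ {ω | (T q)^[n] (X ω) ≤ x}
      = ∑ j ∈ Finset.range N, ℙ (X ⁻¹' Ioc (a j) (b j)) := by
    rw [← measure_biUnion_finset hdisj (fun j _ => hIocm j)]
    apply le_antisymm
    · calc ℙ {ω | (T q)^[n] (X ω) ≤ x}
          ≤ ℙ ((⋃ j ∈ Finset.range N, X ⁻¹' Ioc (a j) (b j)) ∪
            (⋃ j ∈ Finset.range N, X ⁻¹' {a j})) := measure_mono hsub
        _ ≤ ℙ (⋃ j ∈ Finset.range N, X ⁻¹' Ioc (a j) (b j)) +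
            ℙ (⋃ j ∈ Finset.range N, X ⁻¹' {a j}) := measure_union_le _ _
        _ = ℙ (⋃ j ∈ Finset.range N, X ⁻¹' Ioc (a j) (b j)) := by rw [hnull, add_zero]
    · exact measure_mono hsup
  rw [hkey, ENNReal.toReal_sum (fun j _ => measure_ne_top ℙ _)]
  apply Finset.sum_congr rfl
  intro j hj
  have hsplit : X ⁻¹' Iic (b j) = X ⁻¹' Iic (a j) ∪ X ⁻¹' Ioc (a j) (b j) := by
    rw [← Set.preimage_union, Set.Iic_union_Ioc_eq_Iic (hab j)]
  have hd : Disjoint (X ⁻¹' Iic (a j)) (X ⁻¹' Ioc (a j) (b j)) :=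
    (Set.Iic_disjoint_Ioc le_rfl).preimage X
  have hm : ℙ (X ⁻¹' Iic (b j)) = ℙ (X ⁻¹' Iic (a j)) + ℙ (X ⁻¹' Ioc (a j) (b j)) := by
    rw [hsplit, measure_union hd (hIocm j)]
  have h1 : {ω | X ω ≤ ((j : ℝ) + x) / (q : ℝ) ^ n} = X ⁻¹' Iic (b j) := rfl
  have h2 : {ω | X ω ≤ (j : ℝ) / (q : ℝ) ^ n} = X ⁻¹' Iic (a j) := rfl
  rw [h1, h2, hm, ENNReal.toReal_add (measure_ne_top ℙ _) (measure_ne_top ℙ _)]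
  ring
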